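/- Let t and q be positive integers with (t+2)/2 ≤ q ≤ t. Then for every integer n ≥ t, the bipartite Erdős–Gyárfás function satisfies r(K_{n,n}, K_{1,t}, q) = n - t + q. -/

import Mathlib

open Finset

/-- `rBip n s t q` is the bipartite Erdős–Gyárfás function `r(K_{n,n}, K_{s,t}, q)`:
the minimum number of colors in an edge-coloring of `K_{n,n}` such that every copy of
`K_{s,t}` (with its part of size `s` in either side of the bipartition) receives at
least `q` distinct colors on its edges. -/
noncomputable def rBip (n s t q : ℕ) : ℕ :=
  sInf {k : ℕ | ∃ c : Fin n → Fin n → ℕ,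
    (∀ a b, c a b < k) ∧
    ∀ A B : Finset (Fin n),
      (A.card = s ∧ B.card = t) ∨ (A.card = t ∧ B.card = s) →
      q ≤ ((A ×ˢ B).image fun p => c p.1 p.2).card}

lemma psi_inj {n : ℕ} (x : ℕ) {a b : Fin n} (h : (x + a.val) % n = (x + b.val) % n) :
    a = b := by
  have h0 : Nat.ModEq n (x + a.val) (x + b.val) := h
  have h1 : Nat.ModEq n a.val b.val := Nat.ModEq.add_left_cancel' x h0
  have h2 : a.val % n = b.val % n := h1
  apply Fin.ext
  rwa [Nat.mod_eq_of_lt a.isLt, Nat.mod_eq_of_lt b.isLt] at h2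

lemma key_count {n k q t x : ℕ} (hk : 0 < k) (h2k : n < 2 * k)
    (hd : n - k ≤ t - q) (hqt : q ≤ t) (hq0 : 0 < q)
    (S : Finset (Fin n)) (hS : S.card = t)
    (φ : Fin n → ℕ) (hφ : ∀ y, φ y = ((x + y.val) % n) % k) :
    q ≤ (S.image φ).card := by
  classical
  have hn0 : 0 < n := by
    by_contra h
    have hn' : n = 0 := by omega
    subst hn'
    have hSe : S = ∅ := Finset.eq_empty_of_forall_notMem (fun y _ => y.elim0)
    rw [hSe, Finset.card_empty] at hS
    omega
  -- two possible values of (x+y)%n in each fiber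
  have hvals : ∀ (y : Fin n) (v : ℕ), φ y = v →
      (x + y.val) % n = v ∨ (x + y.val) % n = v + k := by
    intro y v hy
    rw [hφ] at hy
    have hzn : (x + y.val) % n < n := Nat.mod_lt _ hn0
    have h1 := Nat.div_add_mod ((x + y.val) % n) k
    have h2 : (x + y.val) % n / k = 0 ∨ (x + y.val) % n / k = 1 := by
      rcases Nat.lt_or_ge ((x + y.val) % n) k with h | h
      · exact Or.inl (Nat.div_eq_of_lt h)
      · exact Or.inr (Nat.div_eq_of_lt_le (by omega) (by omega))
    rcases h2 with h2 | h2 <;> rw [h2] at h1 <;> omega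
  have hfib : ∀ v, (S.filter (fun y => φ y = v)).card ≤ if n ≤ v + k then 1 else 2 := by
    intro v
    split_ifs with hv
    · -- fiber maps into {v}
      have := Finset.card_le_card_of_injOn (fun y => (x + y.val) % n)
        (s := S.filter (fun y => φ y = v)) (t := ({v} : Finset ℕ))
        (by
          intro y hy
          rw [Finset.mem_coe, Finset.mem_filter] at hy
          rcases hvals y v hy.2 with h | h
          · simp [h]
          · have : (x + y.val) % n < n := Nat.mod_lt _ hn0
            omega)
        (by intro a _ b _ hab; exact psi_inj x hab)
      simpa using this
    · have := Finset.card_le_card_of_injOn (fun y => (x + y.val) % n)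
        (s := S.filter (fun y => φ y = v)) (t := ({v, v + k} : Finset ℕ))
        (by
          intro y hy
          rw [Finset.mem_coe, Finset.mem_filter] at hy
          rcases hvals y v hy.2 with h | h <;> simp [h])
        (by intro a _ b _ hab; exact psi_inj x hab)
      calc (S.filter (fun y => φ y = v)).card ≤ ({v, v + k} : Finset ℕ).card := this
        _ ≤ 2 := Finset.card_insert_le _ _ |>.trans (by simp)
  have hsum : t = ∑ v ∈ S.image φ, (S.filter (fun y => φ y = v)).card := by
    rw [← hS]; exact Finset.card_eq_sum_card_image φ S
  have hb : ∑ v ∈ S.image φ, (S.filter (fun y => φ y = v)).card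
      ≤ ∑ v ∈ S.image φ, (1 + if v + k < n then 1 else 0) := by
    apply Finset.sum_le_sum
    intro v _
    have := hfib v
    split_ifs at this ⊢ <;> omega
  rw [Finset.sum_add_distrib, Finset.sum_const, smul_eq_mul, mul_one] at hb
  have hfil : (∑ v ∈ S.image φ, if v + k < n then 1 else 0)
      = ((S.image φ).filter (fun v => v + k < n)).card := (Finset.card_filter _ _).symm
  have hsubr : ((S.image φ).filter (fun v => v + k < n)).card ≤ n - k := by
    have hss : ((S.image φ).filter (fun v => v + k < n)) ⊆ Finset.range (n - k) := by
      intro v hv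
      rw [Finset.mem_filter] at hv
      rw [Finset.mem_range]
      omega
    calc ((S.image φ).filter (fun v => v + k < n)).card
        ≤ (Finset.range (n - k)).card := Finset.card_le_card hss
      _ = n - k := Finset.card_range _
  omega

lemma img_sprod {α β γ : Type*} [DecidableEq γ] (a : α) (B : Finset β) (g : α → β → γ) :
    (({a} ×ˢ B).image fun p => g p.1 p.2) = B.image fun b => g a b := by
  ext z
  simp only [Finset.mem_image, Finset.mem_product, Finset.mem_singleton]
  constructor
  · rintro ⟨⟨p1, p2⟩, ⟨rfl, hp2⟩, rfl⟩; exact ⟨p2, hp2, rfl⟩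
  · rintro ⟨b, hb, rfl⟩; exact ⟨(a, b), ⟨rfl, hb⟩, rfl⟩

lemma img_prods {α β γ : Type*} [DecidableEq γ] (b : β) (A : Finset α) (g : α → β → γ) :
    ((A ×ˢ {b}).image fun p => g p.1 p.2) = A.image fun a => g a b := by
  ext z
  simp only [Finset.mem_image, Finset.mem_product, Finset.mem_singleton]
  constructor
  · rintro ⟨⟨p1, p2⟩, ⟨hp1, rfl⟩, rfl⟩; exact ⟨p1, hp1, rfl⟩
  · rintro ⟨a, ha, rfl⟩; exact ⟨(a, b), ⟨ha, rfl⟩, rfl⟩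

/-- If `(t+2)/2 ≤ q ≤ t`, then for all `n ≥ t`, `r(K_{n,n}, K_{1,t}, q) = n - t + q`. -/
theorem stmt_1 (t q : ℕ) (ht : 1 ≤ t) (hq : 1 ≤ q) (hq1 : t + 2 ≤ 2 * q) (hq2 : q ≤ t) :
    ∀ n : ℕ, t ≤ n → rBip n 1 t q = n - t + q := by
  intro n hn
  classical
  set k := n - t + q with hkdef
  have hqq : 2 ≤ q := by omega
  have hkpos : 0 < k := by omega
  have h2k : n < 2 * k := by omega
  have hd : n - k ≤ t - q := by omega
  have hn0 : 0 < n := by omega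
  have hmem : k ∈ {k : ℕ | ∃ c : Fin n → Fin n → ℕ, (∀ a b, c a b < k) ∧
      ∀ A B : Finset (Fin n), (A.card = 1 ∧ B.card = t) ∨ (A.card = t ∧ B.card = 1) →
      q ≤ ((A ×ˢ B).image fun p => c p.1 p.2).card} := by
    refine ⟨fun a b => ((a.val + b.val) % n) % k, fun a b => Nat.mod_lt _ hkpos, ?_⟩
    intro A B hAB
    rcases hAB with ⟨hA, hB⟩ | ⟨hA, hB⟩
    · obtain ⟨a, rfl⟩ := Finset.card_eq_one.mp hA
      refine le_trans
        (key_count hkpos h2k hd hq2 hq B hB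
          (fun b => ((a.val + b.val) % n) % k) (fun y => rfl))
        (Finset.card_le_card ?_)
      intro v hv
      rw [Finset.mem_image] at hv ⊢
      obtain ⟨b, hb, rfl⟩ := hv
      exact ⟨(a, b), Finset.mem_product.mpr ⟨Finset.mem_singleton_self a, hb⟩, rfl⟩
    · obtain ⟨b, rfl⟩ := Finset.card_eq_one.mp hB
      refine le_trans
        (key_count hkpos h2k hd hq2 hq A hA
          (fun a => ((a.val + b.val) % n) % k) (fun y => by rw [Nat.add_comm]))
        (Finset.card_le_card ?_)
      intro v hv
      rw [Finset.mem_image] at hv ⊢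
      obtain ⟨a, ha, rfl⟩ := hv
      exact ⟨(a, b), Finset.mem_product.mpr ⟨ha, Finset.mem_singleton_self b⟩, rfl⟩
  have hlb : ∀ m ∈ {k : ℕ | ∃ c : Fin n → Fin n → ℕ, (∀ a b, c a b < k) ∧
      ∀ A B : Finset (Fin n), (A.card = 1 ∧ B.card = t) ∨ (A.card = t ∧ B.card = 1) →
      q ≤ ((A ×ˢ B).image fun p => c p.1 p.2).card}, k ≤ m := by
    rintro m ⟨c, hcol, hval⟩
    by_contra hcon
    push_neg at hcon
    set a0 : Fin n := ⟨0, hn0⟩ with ha0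
    set f : Fin n → ℕ := c a0 with hf
    set J : Finset ℕ := Finset.univ.image f with hJ
    have hJm : J.card ≤ m := by
      have hsub : J ⊆ Finset.range m := by
        intro v hv
        rw [hJ, Finset.mem_image] at hv
        obtain ⟨y, _, hy⟩ := hv
        rw [Finset.mem_range, ← hy]
        exact hcol a0 y
      calc J.card ≤ (Finset.range m).card := Finset.card_le_card hsub
        _ = m := Finset.card_range m
    -- choose representatives
    have hgex : ∀ v : ℕ, ∃ y : Fin n, v ∈ J → f y = v := by
      intro v
      by_cases hv : v ∈ J
      · rw [hJ, Finset.mem_image] at hv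
        obtain ⟨y, _, hy⟩ := hv
        exact ⟨y, fun _ => hy⟩
      · exact ⟨a0, fun h => absurd h hv⟩
    choose g hg using hgex
    have hginj : Set.InjOn g ↑J := by
      intro v1 h1 v2 h2 heq
      rw [← hg v1 (Finset.mem_coe.mp h1), ← hg v2 (Finset.mem_coe.mp h2), heq]
    set R : Finset (Fin n) := J.image g with hR
    have hRcard : R.card = J.card := Finset.card_image_of_injOn hginj
    set D : Finset (Fin n) := Finset.univ \ R with hD
    have hDcard : D.card = n - J.card := by
      rw [hD, Finset.card_sdiff_of_subset (Finset.subset_univ R), hRcard, Finset.card_univ,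
        Fintype.card_fin]
    have hDge : t - q + 1 ≤ D.card := by omega
    obtain ⟨T, hTD, hTcard⟩ := Finset.exists_subset_card_eq (s := D) (n := t - q + 1) hDge
    set W : Finset ℕ := T.image f with hW
    have hWJ : W ⊆ J := by
      rw [hW, hJ]
      exact Finset.image_subset_image (Finset.subset_univ T)
    have hWcard : W.card ≤ t - q + 1 := by
      rw [hW, ← hTcard]; exact Finset.card_image_le
    set U : Finset (Fin n) := Finset.univ.filter (fun y => f y ∈ W) with hU
    have hTU : T ⊆ U := by
      intro y hy
      rw [hU, Finset.mem_filter]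
      exact ⟨Finset.mem_univ y, Finset.mem_image_of_mem f hy⟩
    set R' : Finset (Fin n) := W.image g with hR'
    have hR'U : R' ⊆ U := by
      intro y hy
      rw [hR', Finset.mem_image] at hy
      obtain ⟨v, hv, rfl⟩ := hy
      rw [hU, Finset.mem_filter]
      refine ⟨Finset.mem_univ _, ?_⟩
      rw [hg v (hWJ hv)]
      exact hv
    have hR'R : R' ⊆ R := Finset.image_subset_image hWJ
    have hdisj : Disjoint T R' := by
      rw [Finset.disjoint_left]
      intro x hxT hxR'
      have hxD := hTD hxT
      rw [hD, Finset.mem_sdiff] at hxD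
      exact hxD.2 (hR'R hxR')
    have hR'card : R'.card = W.card :=
      Finset.card_image_of_injOn (hginj.mono (Finset.coe_subset.mpr hWJ))
    have hUcard : T.card + W.card ≤ U.card := by
      rw [← hR'card, ← Finset.card_union_of_disjoint hdisj]
      exact Finset.card_le_card (Finset.union_subset hTU hR'U)
    obtain ⟨U', hU'U, hU'card⟩ :=
      Finset.exists_subset_card_eq (s := U) (n := min U.card t) (min_le_left _ _)
    have hcompl : t - min U.card t ≤ (Finset.univ \ U').card := by
      rw [Finset.card_sdiff_of_subset (Finset.subset_univ U'), hU'card, Finset.card_univ,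
        Fintype.card_fin]
      omega
    obtain ⟨V, hVsub, hVcard⟩ :=
      Finset.exists_subset_card_eq (s := Finset.univ \ U') (n := t - min U.card t) hcompl
    have hdisj2 : Disjoint U' V := by
      rw [Finset.disjoint_right]
      intro x hxV hxU'
      have := hVsub hxV
      rw [Finset.mem_sdiff] at this
      exact this.2 hxU' 
    set B : Finset (Fin n) := U' ∪ V with hB
    have hBcard : B.card = t := by
      rw [hB, Finset.card_union_of_disjoint hdisj2, hU'card, hVcard]
      omega
    have himg : (B.image f).card ≤ W.card + (t - min U.card t) := by
      rw [hB, Finset.image_union]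
      calc (U'.image f ∪ V.image f).card ≤ (U'.image f).card + (V.image f).card :=
            Finset.card_union_le _ _
        _ ≤ W.card + (t - min U.card t) := by
            have h1 : U'.image f ⊆ W := by
              intro v hv
              rw [Finset.mem_image] at hv
              obtain ⟨y, hy, rfl⟩ := hv
              have := hU'U hy
              rw [hU, Finset.mem_filter] at this
              exact this.2
            have h2 : (V.image f).card ≤ t - min U.card t := by
              rw [← hVcard]; exact Finset.card_image_le
            have h3 := Finset.card_le_card h1
            omega
    have hq' : q ≤ (B.image f).card := by
      have h := hval {a0} B (Or.inl ⟨Finset.card_singleton a0, hBcard⟩)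
      rwa [img_sprod] at h
    omega
  rw [rBip]
  exact le_antisymm (Nat.sInf_le hmem) (le_csInf ⟨k, hmem⟩ hlb)
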